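/- The map φ sending a dual matrix Â = A₀ + ε·A₁ ∈ SO(3,𝔻) to the real 6×6 block matrix [[A₀, 0],[A₁, A₀]] is an injective group homomorphism (φ(Â·B̂) = φ(Â)·φ(B̂) for all Â, B̂ ∈ SO(3,𝔻)), and its image is exactly the set of block matrices [[A, 0],[T·A, A]] with A·Aᵀ = I, det A = 1, and T a real 3×3 skew-symmetric matrix. -/
import Mathlib


open Matrix MvPolynomial

/-- The dual matrix `Â = A₀ + ε·A₁` over the dual numbers `𝔻 = ℝ[ε]/(ε²)`. -/
noncomputable def dualMat (A₀ A₁ : Matrix (Fin 3) (Fin 3) ℝ) :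
    Matrix (Fin 3) (Fin 3) (DualNumber ℝ) :=
  A₀.map (algebraMap ℝ (DualNumber ℝ)) +
    (DualNumber.eps : DualNumber ℝ) • A₁.map (algebraMap ℝ (DualNumber ℝ))

/-- `(A₀, A₁)` represents an element `A₀ + ε·A₁` of `SO(3,𝔻)`. -/
noncomputable def SO3D (A₀ A₁ : Matrix (Fin 3) (Fin 3) ℝ) : Prop :=
  dualMat A₀ A₁ * (dualMat A₀ A₁)ᵀ = 1 ∧ (dualMat A₀ A₁).det = 1


lemma dualMat_fst (A₀ A₁ : Matrix (Fin 3) (Fin 3) ℝ) (i j : Fin 3) :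
    (dualMat A₀ A₁ i j).fst = A₀ i j := by
  simp [dualMat, Matrix.add_apply, Matrix.smul_apply, Matrix.map_apply, smul_eq_mul,
    TrivSqZeroExt.algebraMap_eq_inl, DualNumber.fst_eps, DualNumber.snd_eps]

lemma dualMat_snd (A₀ A₁ : Matrix (Fin 3) (Fin 3) ℝ) (i j : Fin 3) :
    (dualMat A₀ A₁ i j).snd = A₁ i j := by
  simp [dualMat, Matrix.add_apply, Matrix.smul_apply, Matrix.map_apply, smul_eq_mul,
    TrivSqZeroExt.algebraMap_eq_inl, DualNumber.fst_eps, DualNumber.snd_eps]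

lemma dualMat_inj {A₀ A₁ B₀ B₁ : Matrix (Fin 3) (Fin 3) ℝ}
    (h : dualMat A₀ A₁ = dualMat B₀ B₁) : A₀ = B₀ ∧ A₁ = B₁ := by
  constructor <;> ext i j
  · rw [← dualMat_fst A₀ A₁ i j, ← dualMat_fst B₀ B₁ i j, h]
  · rw [← dualMat_snd A₀ A₁ i j, ← dualMat_snd B₀ B₁ i j, h]

lemma dualMat_mul (A₀ A₁ B₀ B₁ : Matrix (Fin 3) (Fin 3) ℝ) :
    dualMat A₀ A₁ * dualMat B₀ B₁ = dualMat (A₀ * B₀) (A₀ * B₁ + A₁ * B₀) := by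
  ext i j <;>
    simp [Matrix.mul_apply, dualMat_fst, dualMat_snd, TrivSqZeroExt.fst_sum,
      TrivSqZeroExt.fst_mul, TrivSqZeroExt.snd_sum,
      TrivSqZeroExt.snd_mul, Matrix.add_apply, smul_eq_mul, Finset.sum_add_distrib,
      mul_comm]

lemma dualMat_transpose (A₀ A₁ : Matrix (Fin 3) (Fin 3) ℝ) :
    (dualMat A₀ A₁)ᵀ = dualMat A₀ᵀ A₁ᵀ := by
  ext i j <;>
    simp [Matrix.transpose_apply, dualMat_fst, dualMat_snd]

lemma dualMat_one : dualMat 1 0 = 1 := by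
  ext i j <;>
    simp [dualMat_fst, dualMat_snd, Matrix.one_apply, apply_ite]

lemma dualMat_det_fst (A₀ A₁ : Matrix (Fin 3) (Fin 3) ℝ) :
    ((dualMat A₀ A₁).det).fst = A₀.det := by
  have h : (TrivSqZeroExt.fstHom ℝ ℝ ℝ).mapMatrix (dualMat A₀ A₁) = A₀ := by
    ext i j
    simp [dualMat_fst]
  simpa [h] using AlgHom.map_det (TrivSqZeroExt.fstHom ℝ ℝ ℝ) (dualMat A₀ A₁)

lemma dual_sq_one {x : DualNumber ℝ} (hx : x * x = 1) (h1 : x.fst = 1) : x = 1 := by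
  refine TrivSqZeroExt.ext (by simpa using h1) ?_
  have := congrArg TrivSqZeroExt.snd hx
  simp [TrivSqZeroExt.snd_mul, h1] at this
  simpa using this

lemma SO3D_iff (A₀ A₁ : Matrix (Fin 3) (Fin 3) ℝ) :
    SO3D A₀ A₁ ↔ (A₀ * A₀ᵀ = 1 ∧ A₀ * A₁ᵀ + A₁ * A₀ᵀ = 0 ∧ A₀.det = 1) := by
  constructor
  · rintro ⟨h1, h2⟩
    rw [dualMat_transpose, dualMat_mul, ← dualMat_one] at h1
    obtain ⟨ha, hb⟩ := dualMat_inj h1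
    refine ⟨ha, hb, ?_⟩
    have := congrArg TrivSqZeroExt.fst h2
    rwa [dualMat_det_fst] at this
  · rintro ⟨h1, h2, h3⟩
    have horth : dualMat A₀ A₁ * (dualMat A₀ A₁)ᵀ = 1 := by
      rw [dualMat_transpose, dualMat_mul, h1, h2, dualMat_one]
    refine ⟨horth, ?_⟩
    have hsq : (dualMat A₀ A₁).det * (dualMat A₀ A₁).det = 1 := by
      have := congrArg Matrix.det horth
      rwa [Matrix.det_mul, Matrix.det_transpose, Matrix.det_one] at this
    exact dual_sq_one hsq (by rw [dualMat_det_fst, h3])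

/-- The map `φ(A₀ + ε·A₁) = [[A₀, 0], [A₁, A₀]]` as a real `6×6` block matrix. -/
def phiBlock (A₀ A₁ : Matrix (Fin 3) (Fin 3) ℝ) :
    Matrix (Fin 3 ⊕ Fin 3) (Fin 3 ⊕ Fin 3) ℝ :=
  Matrix.fromBlocks A₀ 0 A₁ A₀

/-- `φ : SO(3,𝔻) → SE(3)` is an injective group homomorphism whose image consists of the
block matrices `[[A,0],[T·A,A]]` with `A ∈ SO(3)` and `T` skew-symmetric. -/
theorem phiBlock_injective_hom_image :
    -- φ is multiplicative: the product `(A₀+εA₁)(B₀+εB₁) = A₀B₀ + ε(A₀B₁+A₁B₀)` maps to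
    -- the product of the images
    (∀ A₀ A₁ B₀ B₁ : Matrix (Fin 3) (Fin 3) ℝ, SO3D A₀ A₁ → SO3D B₀ B₁ →
      phiBlock (A₀ * B₀) (A₀ * B₁ + A₁ * B₀) = phiBlock A₀ A₁ * phiBlock B₀ B₁) ∧
    -- φ is injective
    (∀ A₀ A₁ B₀ B₁ : Matrix (Fin 3) (Fin 3) ℝ, SO3D A₀ A₁ → SO3D B₀ B₁ →
      phiBlock A₀ A₁ = phiBlock B₀ B₁ → A₀ = B₀ ∧ A₁ = B₁) ∧
    -- the image of φ is exactly the set of block matrices [[A,0],[T·A,A]] with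
    -- A·Aᵀ = I, det A = 1 and T skew-symmetric
    (∀ M : Matrix (Fin 3 ⊕ Fin 3) (Fin 3 ⊕ Fin 3) ℝ,
      (∃ A₀ A₁ : Matrix (Fin 3) (Fin 3) ℝ, SO3D A₀ A₁ ∧ M = phiBlock A₀ A₁) ↔
      (∃ A T : Matrix (Fin 3) (Fin 3) ℝ, A * Aᵀ = 1 ∧ A.det = 1 ∧ Tᵀ = -T ∧
        M = Matrix.fromBlocks A 0 (T * A) A)) := by
  refine ⟨?_, ?_, ?_⟩
  · intro A₀ A₁ B₀ B₁ _ _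
    simp [phiBlock, Matrix.fromBlocks_multiply, add_comm]
  · intro A₀ A₁ B₀ B₁ _ _ h
    constructor
    · have := congrArg Matrix.toBlocks₁₁ h
      simpa [phiBlock, Matrix.toBlocks_fromBlocks₁₁] using this
    · have := congrArg Matrix.toBlocks₂₁ h
      simpa [phiBlock, Matrix.toBlocks_fromBlocks₂₁] using this
  · intro M
    constructor
    · rintro ⟨A₀, A₁, hS, rfl⟩
      obtain ⟨h1, h2, h3⟩ := (SO3D_iff A₀ A₁).mp hS
      have h1' : A₀ᵀ * A₀ = 1 := mul_eq_one_comm.mp h1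
      refine ⟨A₀, A₁ * A₀ᵀ, h1, h3, ?_, ?_⟩
      · have h4 : A₀ * A₁ᵀ = -(A₁ * A₀ᵀ) := by
          linear_combination (norm := noncomm_ring) h2
        calc (A₁ * A₀ᵀ)ᵀ = A₀ * A₁ᵀ := by simp [Matrix.transpose_mul]
          _ = -(A₁ * A₀ᵀ) := h4
      · simp [phiBlock, Matrix.mul_assoc, h1']
    · rintro ⟨A, T, h1, h2, h3, rfl⟩
      refine ⟨A, T * A, (SO3D_iff A (T * A)).mpr ⟨h1, ?_, h2⟩, rfl⟩
      rw [Matrix.transpose_mul, h3, ← Matrix.mul_assoc, h1, Matrix.mul_assoc, h1]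
      simp
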